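/- Let U be a unitary four-site gate and z ∈ {0,1}×{0,1} a plaquette site. Then M_z is a contraction in the Frobenius (Hilbert–Schmidt) norm: ‖M_z(a)‖_F ≤ ‖a‖_F for every a : Matrix (Fin d) (Fin d) ℂ, where ‖b‖_F = sqrt(∑_{i,j} |b[i,j]|²). -/

import Mathlib

open Matrix

/-- A matrix is unitary if it is inverted by its conjugate transpose on both sides. -/
def IsUnitary {n : Type*} [Fintype n] [DecidableEq n] (M : Matrix n n ℂ) : Prop :=
  M * Mᴴ = 1 ∧ Mᴴ * M = 1

/-- Index type of a four-site gate, legs ordered by the plaquette sites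
`(0,0), (1,0), (0,1), (1,1)`. -/
abbrev FourIdx (d : ℕ) := Fin d × Fin d × Fin d × Fin d

/-- Component of a four-site index at the plaquette site `z ∈ {0,1} × {0,1}`. -/
def comp4 {d : ℕ} (z : Fin 2 × Fin 2) (a : FourIdx d) : Fin d :=
  if z = (0, 0) then a.1
  else if z = (1, 0) then a.2.1
  else if z = (0, 1) then a.2.2.1
  else a.2.2.2

/-- The plaquette site opposite to `z`: `z̄ = (1,1) − z`. -/
def opp (z : Fin 2 × Fin 2) : Fin 2 × Fin 2 := (1 - z.1, 1 - z.2)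

/-- The four-site operator acting as `a` on the leg of site `z` and as the identity
on the other three legs. -/
def siteOp4 {d : ℕ} (z : Fin 2 × Fin 2) (a : Matrix (Fin d) (Fin d) ℂ) :
    Matrix (FourIdx d) (FourIdx d) ℂ :=
  Matrix.of fun p q =>
    (if ∀ w : Fin 2 × Fin 2, w ≠ z → comp4 w p = comp4 w q then 1 else 0) *
      a (comp4 z p) (comp4 z q)

/-- The map `M_z(a) = (1/d³) · Tr_{p \ z̄} [Uᴴ a_z U]`: partial trace over the
three legs other than `z̄` of the conjugation of `a_z` by `U`. -/
noncomputable def Mmap {d : ℕ} (U : Matrix (FourIdx d) (FourIdx d) ℂ) (z : Fin 2 × Fin 2)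
    (a : Matrix (Fin d) (Fin d) ℂ) : Matrix (Fin d) (Fin d) ℂ :=
  Matrix.of fun i j =>
    (1 / (d : ℂ) ^ 3) * ∑ p : FourIdx d, ∑ q : FourIdx d,
      if comp4 (opp z) p = i ∧ comp4 (opp z) q = j ∧
          (∀ w : Fin 2 × Fin 2, w ≠ opp z → comp4 w p = comp4 w q)
        then (Uᴴ * siteOp4 z a * U) p q else 0

/-- The Frobenius (Hilbert–Schmidt) norm of a matrix. -/
noncomputable def frobNorm {d : ℕ} (b : Matrix (Fin d) (Fin d) ℂ) : ℝ :=
  Real.sqrt (∑ i : Fin d, ∑ j : Fin d, ‖(b i j)‖ ^ 2)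

open Finset

lemma fsq_eq_trace {n : Type*} [Fintype n] (M : Matrix n n ℂ) :
    ((∑ p : n, ∑ q : n, ‖(M p q)‖ ^ 2 : ℝ) : ℂ) = Matrix.trace (Mᴴ * M) := by
  rw [Matrix.trace]
  push_cast
  simp only [Matrix.diag_apply, Matrix.mul_apply, Matrix.conjTranspose_apply]
  rw [Finset.sum_comm]
  congr 1; ext p; congr 1; ext q
  rw [← Complex.ofReal_pow, Complex.sq_norm, Complex.normSq_eq_conj_mul_self]
  rfl

lemma fsq_conj {n : Type*} [Fintype n] [DecidableEq n] (V A : Matrix n n ℂ)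
    (hV1 : V * Vᴴ = 1) :
    ∑ p : n, ∑ q : n, ‖((Vᴴ * A * V) p q)‖ ^ 2
      = ∑ p : n, ∑ q : n, ‖(A p q)‖ ^ 2 := by
  have : ((∑ p : n, ∑ q : n, ‖((Vᴴ * A * V) p q)‖ ^ 2 : ℝ) : ℂ)
      = ((∑ p : n, ∑ q : n, ‖(A p q)‖ ^ 2 : ℝ) : ℂ) := by
    rw [fsq_eq_trace, fsq_eq_trace]
    have h1 : (Vᴴ * A * V)ᴴ * (Vᴴ * A * V) = Vᴴ * (Aᴴ * A) * V := by
      simp only [Matrix.conjTranspose_mul, Matrix.conjTranspose_conjTranspose]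
      have : Vᴴ * (Aᴴ * V) * (Vᴴ * (A * V)) = Vᴴ * Aᴴ * (V * Vᴴ) * (A * V) := by
        noncomm_ring
      have h2 : Vᴴ * (Aᴴ * V) * (Vᴴ * A * V) = Vᴴ * Aᴴ * (V * Vᴴ) * A * V := by
        noncomm_ring
      rw [h2, hV1]
      noncomm_ring
    rw [h1, Matrix.trace_mul_cycle, ← Matrix.mul_assoc, hV1, Matrix.one_mul]
  exact_mod_cast this

lemma core {d : ℕ} {K : Type*} [Fintype K] [DecidableEq K]
    (hN : 0 < d * Fintype.card K)
    (V : Matrix (Fin d × Fin d × K) (Fin d × Fin d × K) ℂ)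
    (hV1 : V * Vᴴ = 1)
    (a : Matrix (Fin d) (Fin d) ℂ) :
    ∑ i : Fin d, ∑ j : Fin d, ‖((1 / ((d * Fintype.card K : ℕ) : ℂ)) *
        ∑ x : Fin d, ∑ r : K,
          (Vᴴ * (Matrix.of fun p q : Fin d × Fin d × K =>
            (if p.2 = q.2 then (1:ℂ) else 0) * a p.1 q.1) * V) (x, i, r) (x, j, r))‖ ^ 2
      ≤ ∑ i : Fin d, ∑ j : Fin d, ‖(a i j)‖ ^ 2 := by
  classical
  set N := d * Fintype.card K with hNdef
  set A' : Matrix (Fin d × Fin d × K) (Fin d × Fin d × K) ℂ :=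
    Matrix.of (fun p q => (if p.2 = q.2 then (1:ℂ) else 0) * a p.1 q.1) with hA'def
  set B := Vᴴ * A' * V with hBdef
  have hNpos : (0:ℝ) < (N:ℝ) := by exact_mod_cast hN
  have hcard : (Fintype.card (Fin d × K)) = N := by simp [hNdef, Fintype.card_prod]
  have habs : ∀ (c : Prop) [Decidable c] (z : ℂ),
      ‖((if c then (1:ℂ) else 0) * z)‖ ^ 2
        = if c then ‖z‖ ^ 2 else 0 := by
    intro c _ z; split <;> simp
  have hA : ∑ p : Fin d × Fin d × K, ∑ q : Fin d × Fin d × K, ‖(A' p q)‖ ^ 2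
      = (N:ℝ) * ∑ x : Fin d, ∑ y : Fin d, ‖(a x y)‖ ^ 2 := by
    have h1 : ∀ p : Fin d × Fin d × K,
        ∑ q : Fin d × Fin d × K, ‖(A' p q)‖ ^ 2
          = ∑ y : Fin d, ‖(a p.1 y)‖ ^ 2 := by
      intro p
      rw [Fintype.sum_prod_type]
      simp only [hA'def, Matrix.of_apply, habs]
      simp [Finset.sum_ite_eq]
    simp only [h1]
    rw [Fintype.sum_prod_type]
    simp only [Finset.sum_const, Finset.card_univ, hcard, nsmul_eq_mul]
    rw [Finset.mul_sum]
  have hBnorm : ∑ p : Fin d × Fin d × K, ∑ q : Fin d × Fin d × K, ‖(B p q)‖ ^ 2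
      = (N:ℝ) * ∑ x : Fin d, ∑ y : Fin d, ‖(a x y)‖ ^ 2 := by
    rw [hBdef, fsq_conj V A' hV1]; exact hA
  have hentry : ∀ i j : Fin d,
      ‖((1 / (N : ℂ)) * ∑ x : Fin d, ∑ r : K, B (x,i,r) (x,j,r))‖ ^ 2
        ≤ (1 / (N:ℝ)) * ∑ u : Fin d × K, ‖(B (u.1,i,u.2) (u.1,j,u.2))‖ ^ 2 := by
    intro i j
    rw [norm_mul, mul_pow]
    have hc : ‖(1 / (N : ℂ))‖ = 1 / (N:ℝ) := by simp
    rw [hc]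
    have h1 : ‖(∑ x : Fin d, ∑ r : K, B (x,i,r) (x,j,r))‖
        ≤ ∑ u : Fin d × K, ‖(B (u.1,i,u.2) (u.1,j,u.2))‖ := by
      have e : (∑ x : Fin d, ∑ r : K, B (x,i,r) (x,j,r))
          = ∑ u : Fin d × K, B (u.1,i,u.2) (u.1,j,u.2) :=
        (Fintype.sum_prod_type' (f := fun x r => B (x,i,r) (x,j,r))).symm
      have e2 : (∑ u : Fin d × K, ‖(B (u.1,i,u.2) (u.1,j,u.2))‖)
          = ∑ u : Fin d × K, ‖((fun u : Fin d × K => B (u.1,i,u.2) (u.1,j,u.2)) u)‖ := rfl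
      rw [e, e2]
      exact norm_sum_le _ _
    calc (1/(N:ℝ))^2 * ‖(∑ x : Fin d, ∑ r : K, B (x,i,r) (x,j,r))‖ ^ 2
        ≤ (1/(N:ℝ))^2 * (∑ u : Fin d × K, ‖(B (u.1,i,u.2) (u.1,j,u.2))‖) ^ 2 := by
          apply mul_le_mul_of_nonneg_left _ (by positivity)
          exact pow_le_pow_left₀ (norm_nonneg _) h1 2
      _ ≤ (1/(N:ℝ))^2 * ((N:ℝ) * ∑ u : Fin d × K, ‖(B (u.1,i,u.2) (u.1,j,u.2))‖ ^ 2) := by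
          apply mul_le_mul_of_nonneg_left _ (by positivity)
          have := sq_sum_le_card_mul_sum_sq (s := (Finset.univ : Finset (Fin d × K)))
            (f := fun u => ‖(B (u.1,i,u.2) (u.1,j,u.2))‖)
          simpa [Finset.card_univ, hcard] using this
      _ = (1 / (N:ℝ)) * ∑ u : Fin d × K, ‖(B (u.1,i,u.2) (u.1,j,u.2))‖ ^ 2 := by
          field_simp
  have hinj : ∑ i : Fin d, ∑ j : Fin d, ∑ u : Fin d × K,
        ‖(B (u.1,i,u.2) (u.1,j,u.2))‖ ^ 2
      ≤ ∑ p : Fin d × Fin d × K, ∑ q : Fin d × Fin d × K, ‖(B p q)‖ ^ 2 := by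
    have hRHS : ∑ p : Fin d × Fin d × K, ∑ q : Fin d × Fin d × K, ‖(B p q)‖ ^ 2
        = ∑ u : (Fin d × Fin d × K) × (Fin d × Fin d × K), ‖(B u.1 u.2)‖ ^ 2 :=
      (Fintype.sum_prod_type' (f := fun p q => ‖(B p q)‖ ^ 2)).symm
    rw [hRHS]
    have : ∑ i : Fin d, ∑ j : Fin d, ∑ u : Fin d × K,
          ‖(B (u.1,i,u.2) (u.1,j,u.2))‖ ^ 2
        = ∑ t : Fin d × Fin d × (Fin d × K),
            ‖(B (t.2.2.1, t.1, t.2.2.2) (t.2.2.1, t.2.1, t.2.2.2))‖ ^ 2 := by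
      simp [Fintype.sum_prod_type]
    rw [this]
    set φ : Fin d × Fin d × (Fin d × K) →
        (Fin d × Fin d × K) × (Fin d × Fin d × K) :=
      fun t => ((t.2.2.1, t.1, t.2.2.2), (t.2.2.1, t.2.1, t.2.2.2)) with hφ
    have hφinj : ∀ x ∈ (Finset.univ : Finset (Fin d × Fin d × (Fin d × K))),
        ∀ y ∈ Finset.univ, φ x = φ y → x = y := by
      rintro ⟨i, j, x, r⟩ - ⟨i', j', x', r'⟩ - h
      simp only [hφ, Prod.mk.injEq] at h
      obtain ⟨⟨h1, h2, h3⟩, -, h4, -⟩ := h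
      simp_all
    calc ∑ t : Fin d × Fin d × (Fin d × K),
          ‖(B (t.2.2.1, t.1, t.2.2.2) (t.2.2.1, t.2.1, t.2.2.2))‖ ^ 2
        = ∑ u ∈ Finset.univ.image φ, ‖(B u.1 u.2)‖ ^ 2 := by
          rw [Finset.sum_image hφinj]
      _ ≤ ∑ u : (Fin d × Fin d × K) × (Fin d × Fin d × K), ‖(B u.1 u.2)‖ ^ 2 := by
          apply Finset.sum_le_sum_of_subset_of_nonneg (Finset.subset_univ _)
          intros; positivity
  calc ∑ i : Fin d, ∑ j : Fin d, ‖((1 / ((N : ℕ) : ℂ)) * ∑ x : Fin d, ∑ r : K, B (x,i,r) (x,j,r))‖ ^ 2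
      ≤ ∑ i : Fin d, ∑ j : Fin d, (1 / (N:ℝ)) * ∑ u : Fin d × K,
          ‖(B (u.1,i,u.2) (u.1,j,u.2))‖ ^ 2 := by
        apply Finset.sum_le_sum; intro i _
        apply Finset.sum_le_sum; intro j _
        exact hentry i j
    _ = (1 / (N:ℝ)) * ∑ i : Fin d, ∑ j : Fin d, ∑ u : Fin d × K,
          ‖(B (u.1,i,u.2) (u.1,j,u.2))‖ ^ 2 := by
        rw [Finset.mul_sum]; congr 1; ext i; rw [Finset.mul_sum]
    _ ≤ (1 / (N:ℝ)) * ∑ p : Fin d × Fin d × K, ∑ q : Fin d × Fin d × K,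
          ‖(B p q)‖ ^ 2 := by
        apply mul_le_mul_of_nonneg_left hinj (by positivity)
    _ = ∑ i : Fin d, ∑ j : Fin d, ‖(a i j)‖ ^ 2 := by
        rw [hBnorm]; field_simp

section Bridge
variable {d : ℕ}

lemma key_collapse {d : ℕ} (i j : Fin d)
    (f : (Fin d × Fin d × (Fin d × Fin d)) → (Fin d × Fin d × (Fin d × Fin d)) → ℂ) :
    (∑ p' : Fin d × Fin d × (Fin d × Fin d), ∑ q' : Fin d × Fin d × (Fin d × Fin d),
        if p'.2.1 = i ∧ q'.2.1 = j ∧ (p'.1 = q'.1 ∧ p'.2.2 = q'.2.2) then f p' q' else 0)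
      = ∑ x : Fin d, ∑ r : Fin d × Fin d, f (x, i, r) (x, j, r) := by
  have step1 : ∀ p' : Fin d × Fin d × (Fin d × Fin d),
      (∑ q' : Fin d × Fin d × (Fin d × Fin d),
          if p'.2.1 = i ∧ q'.2.1 = j ∧ (p'.1 = q'.1 ∧ p'.2.2 = q'.2.2) then f p' q' else 0)
        = if p'.2.1 = i then f p' (p'.1, j, p'.2.2) else 0 := by
    intro p'
    by_cases hA : p'.2.1 = i
    · simp only [hA, true_and, if_true]
      have hcq : ∀ q' : Fin d × Fin d × (Fin d × Fin d),
          (q'.2.1 = j ∧ (p'.1 = q'.1 ∧ p'.2.2 = q'.2.2)) ↔ q' = (p'.1, j, p'.2.2) := by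
        rintro ⟨y, j', s⟩
        constructor
        · rintro ⟨h1, h2, h3⟩; simp_all [Prod.ext_iff]
        · intro h; rw [h]; simp
      simp only [hcq]
      simp [Finset.sum_ite_eq']
    · simp [hA]
  rw [Finset.sum_congr rfl (fun p' _ => step1 p')]
  rw [Fintype.sum_prod_type]
  congr 1; ext x
  rw [Fintype.sum_prod_type, Finset.sum_comm]
  simp [Finset.sum_ite_eq']

lemma bridge (hd : 1 ≤ d) (U : Matrix (FourIdx d) (FourIdx d) ℂ) (hU : IsUnitary U)
    (z : Fin 2 × Fin 2) (a : Matrix (Fin d) (Fin d) ℂ)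
    (e : FourIdx d ≃ Fin d × Fin d × (Fin d × Fin d))
    (hz : ∀ p, comp4 z p = (e p).1)
    (ho : ∀ p, comp4 (opp z) p = (e p).2.1)
    (hcz : ∀ p q : FourIdx d,
      (∀ w : Fin 2 × Fin 2, w ≠ z → comp4 w p = comp4 w q) ↔ (e p).2 = (e q).2)
    (hco : ∀ p q : FourIdx d,
      (∀ w : Fin 2 × Fin 2, w ≠ opp z → comp4 w p = comp4 w q) ↔
        ((e p).1 = (e q).1 ∧ (e p).2.2 = (e q).2.2)) :
    frobNorm (Mmap U z a) ≤ frobNorm a := by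
  classical
  set V : Matrix (Fin d × Fin d × (Fin d × Fin d)) (Fin d × Fin d × (Fin d × Fin d)) ℂ :=
    U.submatrix e.symm e.symm with hVdef
  set A' : Matrix (Fin d × Fin d × (Fin d × Fin d)) (Fin d × Fin d × (Fin d × Fin d)) ℂ :=
    Matrix.of (fun p q => (if p.2 = q.2 then (1:ℂ) else 0) * a p.1 q.1) with hA'def
  have hsite : (siteOp4 z a).submatrix ⇑e.symm ⇑e.symm = A' := by
    ext p q
    simp only [Matrix.submatrix_apply, hA'def, Matrix.of_apply, siteOp4]
    have h1 := hcz (e.symm p) (e.symm q)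
    rw [Equiv.apply_symm_apply, Equiv.apply_symm_apply] at h1
    have h2 := hz (e.symm p); have h3 := hz (e.symm q)
    rw [Equiv.apply_symm_apply] at h2
    rw [Equiv.apply_symm_apply] at h3
    rw [h2, h3]
    congr 1
    exact if_congr h1 rfl rfl
  have hV1 : V * Vᴴ = 1 := by
    rw [hVdef, Matrix.conjTranspose_submatrix, Matrix.submatrix_mul_equiv, hU.1,
      Matrix.submatrix_one_equiv]
  have hBsub : Vᴴ * A' * V = (Uᴴ * siteOp4 z a * U).submatrix ⇑e.symm ⇑e.symm := by
    rw [← hsite, hVdef, Matrix.conjTranspose_submatrix, Matrix.submatrix_mul_equiv,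
      Matrix.submatrix_mul_equiv]
  have hconst : ((d : ℂ))^3 = ((d * Fintype.card (Fin d × Fin d) : ℕ) : ℂ) := by
    simp [Fintype.card_prod]; ring
  have hMentry : ∀ i j : Fin d, Mmap U z a i j
      = (1 / ((d * Fintype.card (Fin d × Fin d) : ℕ) : ℂ)) *
          ∑ x : Fin d, ∑ r : Fin d × Fin d, (Vᴴ * A' * V) (x, i, r) (x, j, r) := by
    intro i j
    show (1 / (d : ℂ) ^ 3) * _ = _
    rw [hconst]
    congr 1
    have := key_collapse i j (fun p' q' => (Vᴴ * A' * V) p' q')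
    rw [← this]
    apply Fintype.sum_equiv e
    intro p
    apply Fintype.sum_equiv e
    intro q
    rw [hBsub]
    simp only [Matrix.submatrix_apply, Equiv.symm_apply_apply]
    refine if_congr ?_ rfl rfl
    rw [ho p, ho q]
    exact and_congr Iff.rfl (and_congr Iff.rfl (hco p q))
  have hN : 0 < d * Fintype.card (Fin d × Fin d) := by
    have hd0 : 0 < d := hd
    have : Fintype.card (Fin d × Fin d) = d * d := by simp [Fintype.card_prod]
    rw [this]; positivity
  rw [frobNorm, frobNorm]
  apply Real.sqrt_le_sqrt
  simp only [hMentry]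
  exact core hN V hV1 a

end Bridge

lemma fourCases (w : Fin 2 × Fin 2) :
    w = (0,0) ∨ w = (1,0) ∨ w = (0,1) ∨ w = (1,1) := by
  revert w; decide


/-- `M_z` is a contraction in the Frobenius norm. -/
theorem Mmap_frobenius_contraction (d : ℕ) (hd : 1 ≤ d)
    (U : Matrix (FourIdx d) (FourIdx d) ℂ) (hU : IsUnitary U) (z : Fin 2 × Fin 2)
    (a : Matrix (Fin d) (Fin d) ℂ) :
    frobNorm (Mmap U z a) ≤ frobNorm a := by
  obtain ⟨z1, z2⟩ := z
  fin_cases z1 <;> fin_cases z2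
  · -- z = (0,0), opp = (1,1)
    refine bridge hd U hU (0,0) a
      ⟨fun p => (p.1, p.2.2.2, (p.2.1, p.2.2.1)),
       fun t => (t.1, t.2.2.1, t.2.2.2, t.2.1),
       by rintro ⟨a1,a2,a3,a4⟩; rfl, by rintro ⟨a1,a2,a3,a4⟩; rfl⟩
      (fun p => rfl) (fun p => rfl) ?_ ?_
    · intro p q
      constructor
      · intro h
        have h1 := h (1,0) (by decide)
        have h2 := h (0,1) (by decide)
        have h3 := h (1,1) (by decide)
        simp only [Equiv.coe_fn_mk, Prod.mk.injEq]
        exact ⟨h3, h1, h2⟩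
      · intro h w hw
        simp only [Equiv.coe_fn_mk, Prod.mk.injEq] at h
        obtain ⟨ha, hb, hc⟩ := h
        rcases fourCases w with rfl | rfl | rfl | rfl
        · exact absurd rfl hw
        · exact hb
        · exact hc
        · exact ha
    · intro p q
      constructor
      · intro h
        have h1 := h (1,0) (by decide)
        have h2 := h (0,1) (by decide)
        have h3 := h (0,0) (by decide)
        simp only [Equiv.coe_fn_mk, Prod.mk.injEq]
        exact ⟨h3, h1, h2⟩
      · intro h w hw
        simp only [Equiv.coe_fn_mk, Prod.mk.injEq] at h
        obtain ⟨ha, hb, hc⟩ := h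
        rcases fourCases w with rfl | rfl | rfl | rfl
        · exact ha
        · exact hb
        · exact hc
        · exact absurd rfl hw
  · -- z = (0,1), opp = (1,0)
    refine bridge hd U hU (0,1) a
      ⟨fun p => (p.2.2.1, p.2.1, (p.1, p.2.2.2)),
       fun t => (t.2.2.1, t.2.1, t.1, t.2.2.2),
       by rintro ⟨a1,a2,a3,a4⟩; rfl, by rintro ⟨a1,a2,a3,a4⟩; rfl⟩
      (fun p => rfl) (fun p => rfl) ?_ ?_
    · intro p q
      constructor
      · intro h
        have h1 := h (0,0) (by decide)
        have h2 := h (1,0) (by decide)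
        have h3 := h (1,1) (by decide)
        simp only [Equiv.coe_fn_mk, Prod.mk.injEq]
        exact ⟨h2, h1, h3⟩
      · intro h w hw
        simp only [Equiv.coe_fn_mk, Prod.mk.injEq] at h
        obtain ⟨ha, hb, hc⟩ := h
        rcases fourCases w with rfl | rfl | rfl | rfl
        · exact hb
        · exact ha
        · exact absurd rfl hw
        · exact hc
    · intro p q
      constructor
      · intro h
        have h1 := h (0,0) (by decide)
        have h2 := h (0,1) (by decide)
        have h3 := h (1,1) (by decide)
        simp only [Equiv.coe_fn_mk, Prod.mk.injEq]
        exact ⟨h2, h1, h3⟩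
      · intro h w hw
        simp only [Equiv.coe_fn_mk, Prod.mk.injEq] at h
        obtain ⟨ha, hb, hc⟩ := h
        rcases fourCases w with rfl | rfl | rfl | rfl
        · exact hb
        · exact absurd rfl hw
        · exact ha
        · exact hc
  · -- z = (1,0), opp = (0,1)
    refine bridge hd U hU (1,0) a
      ⟨fun p => (p.2.1, p.2.2.1, (p.1, p.2.2.2)),
       fun t => (t.2.2.1, t.1, t.2.1, t.2.2.2),
       by rintro ⟨a1,a2,a3,a4⟩; rfl, by rintro ⟨a1,a2,a3,a4⟩; rfl⟩
      (fun p => rfl) (fun p => rfl) ?_ ?_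
    · intro p q
      constructor
      · intro h
        have h1 := h (0,0) (by decide)
        have h2 := h (0,1) (by decide)
        have h3 := h (1,1) (by decide)
        simp only [Equiv.coe_fn_mk, Prod.mk.injEq]
        exact ⟨h2, h1, h3⟩
      · intro h w hw
        simp only [Equiv.coe_fn_mk, Prod.mk.injEq] at h
        obtain ⟨ha, hb, hc⟩ := h
        rcases fourCases w with rfl | rfl | rfl | rfl
        · exact hb
        · exact absurd rfl hw
        · exact ha
        · exact hc
    · intro p q
      constructor
      · intro h
        have h1 := h (0,0) (by decide)
        have h2 := h (1,0) (by decide)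
        have h3 := h (1,1) (by decide)
        simp only [Equiv.coe_fn_mk, Prod.mk.injEq]
        exact ⟨h2, h1, h3⟩
      · intro h w hw
        simp only [Equiv.coe_fn_mk, Prod.mk.injEq] at h
        obtain ⟨ha, hb, hc⟩ := h
        rcases fourCases w with rfl | rfl | rfl | rfl
        · exact hb
        · exact ha
        · exact absurd rfl hw
        · exact hc
  · -- z = (1,1), opp = (0,0)
    refine bridge hd U hU (1,1) a
      ⟨fun p => (p.2.2.2, p.1, (p.2.1, p.2.2.1)),
       fun t => (t.2.1, t.2.2.1, t.2.2.2, t.1),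
       by rintro ⟨a1,a2,a3,a4⟩; rfl, by rintro ⟨a1,a2,a3,a4⟩; rfl⟩
      (fun p => rfl) (fun p => rfl) ?_ ?_
    · intro p q
      constructor
      · intro h
        have h1 := h (0,0) (by decide)
        have h2 := h (1,0) (by decide)
        have h3 := h (0,1) (by decide)
        simp only [Equiv.coe_fn_mk, Prod.mk.injEq]
        exact ⟨h1, h2, h3⟩
      · intro h w hw
        simp only [Equiv.coe_fn_mk, Prod.mk.injEq] at h
        obtain ⟨ha, hb, hc⟩ := h
        rcases fourCases w with rfl | rfl | rfl | rfl
        · exact ha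
        · exact hb
        · exact hc
        · exact absurd rfl hw
    · intro p q
      constructor
      · intro h
        have h1 := h (1,0) (by decide)
        have h2 := h (0,1) (by decide)
        have h3 := h (1,1) (by decide)
        simp only [Equiv.coe_fn_mk, Prod.mk.injEq]
        exact ⟨h3, h1, h2⟩
      · intro h w hw
        simp only [Equiv.coe_fn_mk, Prod.mk.injEq] at h
        obtain ⟨ha, hb, hc⟩ := h
        rcases fourCases w with rfl | rfl | rfl | rfl
        · exact absurd rfl hw
        · exact hb
        · exact hc
        · exact ha
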